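/- Let f ∈ C²(ℝ₊,ℝ) satisfy f''(s) + ((n−1)/(n·s))·f'(s) ≥ 0 and f'(s) ≤ 0 for all s > 0. Then the function C ↦ f(det C) is convex on the set PSym(n) of real symmetric positive definite n×n matrices. -/

import Mathlib

open Matrix Finset Real

lemma geom_superadd {n : ℕ} (hn : 0 < n) (μ : Fin n → ℝ) (hμ : ∀ i, 0 ≤ μ i) :
    1 + (∏ i, μ i) ^ ((n:ℝ)⁻¹) ≤ (∏ i, (1 + μ i)) ^ ((n:ℝ)⁻¹) := by
  have h1 : ∀ i, (0:ℝ) < 1 + μ i := fun i => by linarith [hμ i]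
  have hw : ∀ i ∈ (univ : Finset (Fin n)), (0:ℝ) ≤ (n:ℝ)⁻¹ := fun i _ => by positivity
  have hw' : ∑ _i : Fin n, (n:ℝ)⁻¹ = 1 := by
    simp [Finset.sum_const, Finset.card_fin]
    field_simp
  have key1 := Real.geom_mean_le_arith_mean_weighted univ (fun _ => (n:ℝ)⁻¹)
    (fun i => (1 + μ i)⁻¹) hw hw' (fun i _ => inv_nonneg.mpr (h1 i).le)
  have key2 := Real.geom_mean_le_arith_mean_weighted univ (fun _ => (n:ℝ)⁻¹)
    (fun i => μ i * (1 + μ i)⁻¹) hw hw' (fun i _ => mul_nonneg (hμ i) (inv_nonneg.mpr (h1 i).le))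
  have hsum : (∏ i, ((1 + μ i)⁻¹)) ^ ((n:ℝ)⁻¹) + (∏ i, (μ i * (1 + μ i)⁻¹)) ^ ((n:ℝ)⁻¹) ≤ 1 := by
    rw [← Real.finset_prod_rpow _ _ (fun i _ => inv_nonneg.mpr (h1 i).le) _,
        ← Real.finset_prod_rpow _ _ (fun i _ => mul_nonneg (hμ i) (inv_nonneg.mpr (h1 i).le)) _]
    calc (∏ i, ((1 + μ i)⁻¹) ^ ((n:ℝ)⁻¹)) + (∏ i, (μ i * (1 + μ i)⁻¹) ^ ((n:ℝ)⁻¹))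
        ≤ (∑ i, (n:ℝ)⁻¹ * (1 + μ i)⁻¹) + ∑ i, (n:ℝ)⁻¹ * (μ i * (1 + μ i)⁻¹) :=
          add_le_add key1 key2
      _ = ∑ i, (n:ℝ)⁻¹ * ((1 + μ i)⁻¹ + μ i * (1 + μ i)⁻¹) := by
          rw [← Finset.sum_add_distrib]; congr 1; ext i; ring
      _ = ∑ _i : Fin n, (n:ℝ)⁻¹ := by
          congr 1; ext i
          have : (1 + μ i)⁻¹ + μ i * (1 + μ i)⁻¹ = 1 := by
            field_simp
            rw [div_self (h1 i).ne']
          rw [this, mul_one]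
      _ = 1 := hw'
  have hP : (0:ℝ) < ∏ i, (1 + μ i) := Finset.prod_pos (fun i _ => h1 i)
  have idA : (∏ i, ((1 + μ i)⁻¹)) ^ ((n:ℝ)⁻¹) * (∏ i, (1 + μ i)) ^ ((n:ℝ)⁻¹) = 1 := by
    rw [← Real.mul_rpow (Finset.prod_nonneg (fun i _ => inv_nonneg.mpr (h1 i).le)) hP.le,
      ← Finset.prod_mul_distrib]
    simp [fun i => (h1 i).ne']
  have idB : (∏ i, (μ i * (1 + μ i)⁻¹)) ^ ((n:ℝ)⁻¹) * (∏ i, (1 + μ i)) ^ ((n:ℝ)⁻¹)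
      = (∏ i, μ i) ^ ((n:ℝ)⁻¹) := by
    rw [← Real.mul_rpow (Finset.prod_nonneg (fun i _ => mul_nonneg (hμ i) (inv_nonneg.mpr (h1 i).le))) hP.le,
      ← Finset.prod_mul_distrib]
    congr 2
    ext i
    rw [mul_assoc, inv_mul_cancel₀ (h1 i).ne', mul_one]
  calc 1 + (∏ i, μ i) ^ ((n:ℝ)⁻¹)
      = ((∏ i, ((1 + μ i)⁻¹)) ^ ((n:ℝ)⁻¹) + (∏ i, (μ i * (1 + μ i)⁻¹)) ^ ((n:ℝ)⁻¹))
        * (∏ i, (1 + μ i)) ^ ((n:ℝ)⁻¹) := by rw [add_mul, idA, idB]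
    _ ≤ 1 * (∏ i, (1 + μ i)) ^ ((n:ℝ)⁻¹) := by
        apply mul_le_mul_of_nonneg_right hsum (by positivity)
    _ = (∏ i, (1 + μ i)) ^ ((n:ℝ)⁻¹) := one_mul _

lemma det_one_add_of_hermitian {n : ℕ} {C : Matrix (Fin n) (Fin n) ℝ} (hC : C.IsHermitian) :
    (1 + C).det = ∏ i, (1 + hC.eigenvalues i) := by
  have hU : (hC.eigenvectorUnitary : Matrix (Fin n) (Fin n) ℝ)
      * star (hC.eigenvectorUnitary : Matrix (Fin n) (Fin n) ℝ) = 1 :=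
    (Matrix.mem_unitaryGroup_iff).mp hC.eigenvectorUnitary.2
  have key : 1 + C = (hC.eigenvectorUnitary : Matrix (Fin n) (Fin n) ℝ)
      * (1 + diagonal (RCLike.ofReal ∘ hC.eigenvalues))
      * star (hC.eigenvectorUnitary : Matrix (Fin n) (Fin n) ℝ) := by
    rw [Matrix.mul_add, Matrix.add_mul, Matrix.mul_one, hU, ← Unitary.conjStarAlgAut_apply (S := ℝ), ← hC.spectral_theorem]
  rw [key, det_mul, det_mul]
  have : det (hC.eigenvectorUnitary : Matrix (Fin n) (Fin n) ℝ)
      * det (star (hC.eigenvectorUnitary : Matrix (Fin n) (Fin n) ℝ)) = 1 := by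
    rw [← det_mul, hU, det_one]
  calc det (hC.eigenvectorUnitary : Matrix (Fin n) (Fin n) ℝ)
        * det (1 + diagonal (RCLike.ofReal ∘ hC.eigenvalues))
        * det (star (hC.eigenvectorUnitary : Matrix (Fin n) (Fin n) ℝ))
      = det (1 + diagonal (RCLike.ofReal ∘ hC.eigenvalues))
        * (det (hC.eigenvectorUnitary : Matrix (Fin n) (Fin n) ℝ)
          * det (star (hC.eigenvectorUnitary : Matrix (Fin n) (Fin n) ℝ))) := by ring
    _ = det (1 + diagonal (RCLike.ofReal ∘ hC.eigenvalues)) := by rw [this, mul_one]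
    _ = ∏ i, (1 + hC.eigenvalues i) := by
        rw [← diagonal_one, diagonal_add, det_diagonal]
        simp

lemma det_minkowski {n : ℕ} (hn : 0 < n) {A B : Matrix (Fin n) (Fin n) ℝ}
    (hA : A.PosDef) (hB : B.PosDef) :
    A.det ^ ((n:ℝ)⁻¹) + B.det ^ ((n:ℝ)⁻¹) ≤ (A + B).det ^ ((n:ℝ)⁻¹) := by
  set S := (open scoped MatrixOrder in CFC.sqrt A) with hSdef
  have hSS : S * S = A := by
    open scoped MatrixOrder in exact CFC.sqrt_mul_sqrt_self A hA.posSemidef.nonneg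
  have hdetA : 0 < A.det := hA.det_pos
  have hdetS : S.det * S.det = A.det := by rw [← det_mul, hSS]
  have hdS : S.det ≠ 0 := by
    intro h0
    rw [h0, mul_zero] at hdetS
    exact hdetA.ne hdetS
  have hSu : IsUnit S.det := isUnit_iff_ne_zero.mpr hdS
  have hSherm : S.IsHermitian := by
    open scoped MatrixOrder in exact (CFC.sqrt_nonneg A).posSemidef.1
  have hSinvherm : (S⁻¹).IsHermitian := by
    rw [Matrix.IsHermitian, conjTranspose_nonsing_inv, hSherm.eq]
  set C := S⁻¹ * B * S⁻¹ with hCdef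
  have hC : C.PosSemidef := by
    have := hB.posSemidef.mul_mul_conjTranspose_same S⁻¹
    rwa [hSinvherm.eq] at this
  have hAB : A + B = S * (1 + C) * S := by
    rw [Matrix.mul_add, Matrix.add_mul, Matrix.mul_one, hSS]
    congr 1
    rw [hCdef]
    refine Eq.symm ?_
    calc S * (S⁻¹ * B * S⁻¹) * S
        = (S * S⁻¹) * B * (S⁻¹ * S) := by
          simp only [Matrix.mul_assoc]
      _ = B := by
          rw [Matrix.mul_nonsing_inv S hSu, Matrix.nonsing_inv_mul S hSu,
            Matrix.one_mul, Matrix.mul_one]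
  have hdetSinv : S⁻¹.det = S.det⁻¹ := by
    rw [det_nonsing_inv, Ring.inverse_eq_inv']
  have hdetACB : A.det * C.det = B.det := by
    rw [hCdef, det_mul, det_mul, hdetSinv, ← hdetS]
    field_simp
  have hdetAB : (A + B).det = A.det * (1 + C).det := by
    rw [hAB, det_mul, det_mul, ← hdetS]
    ring
  set μ := hC.1.eigenvalues with hμdef
  have hμ : ∀ i, 0 ≤ μ i := fun i => hC.eigenvalues_nonneg i
  have hdetC : C.det = ∏ i, μ i := by
    simpa using hC.1.det_eq_prod_eigenvalues
  have hdet1C : (1 + C).det = ∏ i, (1 + μ i) := det_one_add_of_hermitian hC.1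
  have hstep : 1 + C.det ^ ((n:ℝ)⁻¹) ≤ (1 + C).det ^ ((n:ℝ)⁻¹) := by
    rw [hdetC, hdet1C]
    exact geom_superadd hn μ hμ
  have hdetCnn : 0 ≤ C.det := by
    rw [hdetC]; exact Finset.prod_nonneg fun i _ => hμ i
  have hApow : (0:ℝ) ≤ A.det ^ ((n:ℝ)⁻¹) := Real.rpow_nonneg hdetA.le _
  calc A.det ^ ((n:ℝ)⁻¹) + B.det ^ ((n:ℝ)⁻¹)
      = A.det ^ ((n:ℝ)⁻¹) * (1 + C.det ^ ((n:ℝ)⁻¹)) := by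
        rw [mul_add, mul_one, ← Real.mul_rpow hdetA.le hdetCnn, hdetACB]
    _ ≤ A.det ^ ((n:ℝ)⁻¹) * (1 + C).det ^ ((n:ℝ)⁻¹) :=
        mul_le_mul_of_nonneg_left hstep hApow
    _ = (A + B).det ^ ((n:ℝ)⁻¹) := by
        have h1C : (0:ℝ) ≤ (1 + C).det := by
          rw [hdet1C]
          exact Finset.prod_nonneg fun i _ => by linarith [hμ i]
        rw [← Real.mul_rpow hdetA.le h1C, ← hdetAB]


lemma posDef_smul' {n : ℕ} {A : Matrix (Fin n) (Fin n) ℝ} (hA : A.PosDef) {c : ℝ} (hc : 0 < c) :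
    (c • A).PosDef := by
  refine ⟨?_, fun x hx => ?_⟩
  · show (c • A)ᴴ = c • A
    rw [conjTranspose_smul, hA.1.eq]
    simp
  · exact (hA.smul hc).2 hx

theorem convexOn_f_det_of_diff_ineq (n : ℕ) (f : ℝ → ℝ)
    (hf : ContDiffOn ℝ 2 f (Set.Ioi 0))
    (h : ∀ s : ℝ, 0 < s →
        0 ≤ deriv (deriv f) s + ((n : ℝ) - 1) / ((n : ℝ) * s) * deriv f s ∧
        deriv f s ≤ 0) :
    ConvexOn ℝ {C : Matrix (Fin n) (Fin n) ℝ | C.PosDef} (fun C => f C.det) := by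
  rcases Nat.eq_zero_or_pos n with rfl | hn
  · have hset : {C : Matrix (Fin 0) (Fin 0) ℝ | C.PosDef} = Set.univ := by
      ext C
      simp only [Set.mem_setOf_eq, Set.mem_univ, iff_true]
      exact ⟨Subsingleton.elim _ _, fun x hx => absurd (Subsingleton.elim x 0) hx⟩
    have hfun : (fun C : Matrix (Fin 0) (Fin 0) ℝ => f C.det) = fun _ => f 1 := by
      funext C
      rw [det_fin_zero]
    rw [hset, hfun]
    exact convexOn_const _ convex_univ
  -- n ≥ 1
  have hn' : (n:ℝ) ≠ 0 := Nat.cast_ne_zero.mpr hn.ne'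
  set φ : ℝ → ℝ := fun t => f (t ^ n) with hφdef
  set φ' : ℝ → ℝ := fun t => deriv f (t ^ n) * ((n:ℝ) * t ^ (n - 1)) with hφ'def
  set ψ : ℝ → ℝ := fun t =>
    deriv (deriv f) (t ^ n) * ((n:ℝ) * t ^ (n - 1)) * ((n:ℝ) * t ^ (n - 1))
      + deriv f (t ^ n) * ((n:ℝ) * (((n - 1 : ℕ):ℝ) * t ^ (n - 1 - 1))) with hψdef
  have hfd : ∀ s ∈ Set.Ioi (0:ℝ), HasDerivAt f (deriv f s) s := by
    intro s hs
    exact ((hf.differentiableOn (by norm_num)).differentiableAt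
      (isOpen_Ioi.mem_nhds hs)).hasDerivAt
  have hfc1 : ContDiffOn ℝ 1 (deriv f) (Set.Ioi 0) :=
    hf.deriv_of_isOpen isOpen_Ioi (by norm_num)
  have hfd2 : ∀ s ∈ Set.Ioi (0:ℝ), HasDerivAt (deriv f) (deriv (deriv f) s) s := by
    intro s hs
    exact ((hfc1.differentiableOn (by norm_num)).differentiableAt
      (isOpen_Ioi.mem_nhds hs)).hasDerivAt
  have hmem : ∀ t : ℝ, t ∈ Set.Ioi (0:ℝ) → t ^ n ∈ Set.Ioi (0:ℝ) := by
    intro t ht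
    exact pow_pos (Set.mem_Ioi.mp ht) n
  have hφc : ContinuousOn φ (Set.Ioi 0) := by
    apply hf.continuousOn.comp (continuous_pow n).continuousOn hmem
  have hφ' : ∀ t ∈ Set.Ioi (0:ℝ), HasDerivAt φ (φ' t) t := by
    intro t ht
    exact (hfd _ (hmem t ht)).comp t (hasDerivAt_pow n t)
  have hφ'' : ∀ t ∈ Set.Ioi (0:ℝ), HasDerivAt φ' (ψ t) t := by
    intro t ht
    exact ((hfd2 _ (hmem t ht)).comp t (hasDerivAt_pow n t)).mul
      ((hasDerivAt_pow (n - 1) t).const_mul (n:ℝ))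
  have hψ0 : ∀ t ∈ Set.Ioi (0:ℝ), 0 ≤ ψ t := by
    intro t ht
    have ht' : (0:ℝ) < t := ht
    obtain ⟨h1, _⟩ := h (t ^ n) (hmem t ht)
    have key : (n:ℝ) * (((n - 1 : ℕ):ℝ) * t ^ (n - 1 - 1))
        = ((n:ℝ) * t ^ (n - 1)) * ((n:ℝ) * t ^ (n - 1)) * (((n:ℝ) - 1) / ((n:ℝ) * t ^ n)) := by
      rcases Nat.lt_or_ge n 2 with h2 | h2
      · have hn1 : n = 1 := by omega
        subst hn1
        norm_num
      · have hc : ((n - 1 : ℕ):ℝ) = (n:ℝ) - 1 := by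
          push_cast [Nat.cast_sub (by omega : 1 ≤ n)]
          ring
        have hpow : t ^ (n - 1 - 1) * t ^ n = t ^ (n - 1) * t ^ (n - 1) := by
          rw [← pow_add, ← pow_add]
          congr 1
          omega
        have htn : (0:ℝ) < t ^ n := hmem t ht
        rw [hc]
        rw [mul_div_assoc', eq_div_iff (mul_ne_zero hn' htn.ne')]
        linear_combination ((n:ℝ) * (n:ℝ) * ((n:ℝ) - 1)) * hpow
    calc (0:ℝ)
        ≤ ((n:ℝ) * t ^ (n - 1)) * ((n:ℝ) * t ^ (n - 1))
            * (deriv (deriv f) (t ^ n) + ((n:ℝ) - 1) / ((n:ℝ) * t ^ n) * deriv f (t ^ n)) :=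
          mul_nonneg (mul_self_nonneg _) h1
      _ = ψ t := by
          rw [hψdef]
          simp only
          rw [key]
          ring
  have hioi : interior (Set.Ioi (0:ℝ)) = Set.Ioi 0 := interior_Ioi
  have hφconv : ConvexOn ℝ (Set.Ioi 0) φ := by
    apply convexOn_of_hasDerivWithinAt2_nonneg (convex_Ioi 0) hφc
      (f' := φ') (f'' := ψ)
    · rw [hioi]
      exact fun x hx => (hφ' x hx).hasDerivWithinAt
    · rw [hioi]
      exact fun x hx => (hφ'' x hx).hasDerivWithinAt
    · rw [hioi]
      exact hψ0
  have hφanti : AntitoneOn φ (Set.Ioi 0) := by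
    apply antitoneOn_of_hasDerivWithinAt_nonpos (convex_Ioi 0) hφc (f' := φ')
    · rw [hioi]
      exact fun x hx => (hφ' x hx).hasDerivWithinAt
    · rw [hioi]
      intro x hx
      have h2 := (h (x ^ n) (hmem x hx)).2
      have hpos : (0:ℝ) ≤ (n:ℝ) * x ^ (n - 1) := by
        have : (0:ℝ) < x := hx
        positivity
      exact mul_nonpos_of_nonpos_of_nonneg h2 hpos
  have hconvset : Convex ℝ {C : Matrix (Fin n) (Fin n) ℝ | C.PosDef} := by
    intro A hA B hB a b ha hb hab
    simp only [Set.mem_setOf_eq] at hA hB ⊢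
    rcases eq_or_lt_of_le ha with rfl | ha'
    · have hb1 : b = 1 := by linarith
      simpa [hb1] using hB
    rcases eq_or_lt_of_le hb with rfl | hb'
    · have ha1 : a = 1 := by linarith
      simpa [ha1] using hA
    exact (posDef_smul' hA ha').add (posDef_smul' hB hb')
  refine ⟨hconvset, ?_⟩
  intro A hA B hB a b ha hb hab
  simp only [Set.mem_setOf_eq] at hA hB
  simp only [smul_eq_mul]
  rcases eq_or_lt_of_le ha with rfl | ha'
  · have hb1 : b = 1 := by linarith
    simp [hb1]
  rcases eq_or_lt_of_le hb with rfl | hb'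
  · have ha1 : a = 1 := by linarith
    simp [ha1]
  have hAa : (a • A).PosDef := posDef_smul' hA ha'
  have hBb : (b • B).PosDef := posDef_smul' hB hb'
  have hM : (a • A + b • B).PosDef := hAa.add hBb
  have hdA : 0 < A.det := hA.det_pos
  have hdB : 0 < B.det := hB.det_pos
  have hdM : 0 < (a • A + b • B).det := hM.det_pos
  have hφval : ∀ {D : Matrix (Fin n) (Fin n) ℝ}, 0 < D.det →
      φ (D.det ^ ((n:ℝ)⁻¹)) = f D.det := by
    intro D hD
    rw [hφdef]
    simp only
    rw [Real.rpow_inv_natCast_pow hD.le hn.ne']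
  have hsmulpow : ∀ (c : ℝ), 0 ≤ c → ∀ (D : Matrix (Fin n) (Fin n) ℝ), 0 < D.det →
      (c • D).det ^ ((n:ℝ)⁻¹) = c * D.det ^ ((n:ℝ)⁻¹) := by
    intro c hc D hD
    rw [det_smul]
    simp only [Fintype.card_fin]
    rw [Real.mul_rpow (pow_nonneg hc n) hD.le, Real.pow_rpow_inv_natCast hc hn.ne']
  have hmink := det_minkowski hn hAa hBb
  rw [hsmulpow a ha A hdA, hsmulpow b hb B hdB] at hmink
  have hdApow : 0 < A.det ^ ((n:ℝ)⁻¹) := Real.rpow_pos_of_pos hdA _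
  have hdBpow : 0 < B.det ^ ((n:ℝ)⁻¹) := Real.rpow_pos_of_pos hdB _
  have hdMpow : 0 < (a • A + b • B).det ^ ((n:ℝ)⁻¹) := Real.rpow_pos_of_pos hdM _
  have hcomb : 0 < a * A.det ^ ((n:ℝ)⁻¹) + b * B.det ^ ((n:ℝ)⁻¹) :=
    add_pos (mul_pos ha' hdApow) (mul_pos hb' hdBpow)
  calc f (a • A + b • B).det
      = φ ((a • A + b • B).det ^ ((n:ℝ)⁻¹)) := (hφval hdM).symm
    _ ≤ φ (a * A.det ^ ((n:ℝ)⁻¹) + b * B.det ^ ((n:ℝ)⁻¹)) := hφanti hcomb hdMpow hmink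
    _ ≤ a * φ (A.det ^ ((n:ℝ)⁻¹)) + b * φ (B.det ^ ((n:ℝ)⁻¹)) := by
        have := hφconv.2 (Set.mem_Ioi.mpr hdApow) (Set.mem_Ioi.mpr hdBpow) ha hb hab
        simpa [smul_eq_mul] using this
    _ = a * f A.det + b * f B.det := by rw [hφval hdA, hφval hdB]
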